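/- For every u ∈ U₀, the function φ_u(λ) = M°_λ(u) is a finite harmonic function on the Gnedin–Kingman graph GK with φ_u(∅) = 1. -/

import Mathlib

open scoped ENNReal NNReal

namespace GK

/-! ## The Gnedin–Kingman graph -/

/-- Decrement (if the part is ≥ 2) or delete (otherwise) the part of `μ` at position `p`. -/
def stepAt (μ : List ℕ) (p : ℕ) : List ℕ :=
  if 2 ≤ μ.getD p 0 then μ.set p (μ.getD p 0 - 1) else μ.eraseIdx p

/-- Edge multiplicity `κ(ν,μ)` of the Gnedin–Kingman graph: the number of positions of `μ`
at which decrementing a part ≥ 2 (or deleting a part equal to 1) produces `ν`. -/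
def kappa (ν μ : List ℕ) : ℕ :=
  ((Finset.range μ.length).filter fun p => stepAt μ p = ν).card

/-- `ν ↗ μ`. -/
def Rel (ν μ : List ℕ) : Prop := 0 < kappa ν μ

def IsComposition (l : List ℕ) : Prop := ∀ n ∈ l, 0 < n

/-- Compositions: finite lists of positive integers. -/
abbrev Comp := {l : List ℕ // IsComposition l}

/-- The empty composition ∅. -/
def cEmpty : Comp := ⟨[], fun _ h => nomatch h⟩

/-- Harmonicity, for `[0,∞]`-valued functions on the Gnedin–Kingman graph
(with the conventions `0·∞ = 0` and `x + ∞ = ∞` of `ℝ≥0∞`). -/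
def HarmonicE (φ : Comp → ℝ≥0∞) : Prop :=
  ∀ l : Comp, φ l = ∑' μ : Comp, (kappa l.1 μ.1 : ℝ≥0∞) * φ μ

/-- Harmonicity, for real-valued functions. -/
def HarmonicR (φ : Comp → ℝ) : Prop :=
  ∀ l : Comp, φ l = ∑' μ : Comp, (kappa l.1 μ.1 : ℝ) * φ μ

/-- A finite harmonic function: real-valued (hence finite), nonnegative, harmonic. -/
def FiniteHarmonic (φ : Comp → ℝ) : Prop :=
  HarmonicR φ ∧ ∀ l, 0 ≤ φ l

/-- The quasi-shuffle coefficient `c^γ_{α,β}`: the number of pairs of strictly increasing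
maps `f, g` into the positions of `γ` which jointly cover all positions of `γ` and such that
each part of `γ` is the sum of the corresponding parts of `α` and `β`. -/
noncomputable def qsCoeff (α β γ : List ℕ) : ℕ :=
  Nat.card {fg : (Fin α.length → Fin γ.length) × (Fin β.length → Fin γ.length) //
    StrictMono fg.1 ∧ StrictMono fg.2 ∧
    (∀ s, (∃ i, fg.1 i = s) ∨ (∃ j, fg.2 j = s)) ∧
    ∀ s : Fin γ.length,
      γ.get s = (∑ i, if fg.1 i = s then α.get i else 0) +
                (∑ j, if fg.2 j = s then β.get j else 0)}

/-- Indecomposability of a finite harmonic function normalized at ∅. -/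
def IndecFin (φ : Comp → ℝ) : Prop :=
  ∀ φ₁ φ₂ : Comp → ℝ, FiniteHarmonic φ₁ → FiniteHarmonic φ₂ →
    φ₁ cEmpty = 1 → φ₂ cEmpty = 1 →
    ∀ c₁ c₂ : ℝ, 0 < c₁ → 0 < c₂ → c₁ + c₂ = 1 →
      (∀ l, φ l = c₁ * φ₁ l + c₂ * φ₂ l) → φ = φ₁ ∨ φ = φ₂

/-! ## Typed weight sequences, `M°_λ` and `U₀` -/

/-- `M°_λ(v)` for a typed weight sequence `v` (`true` = h, `false` = v): the sum over all
decompositions of `λ` into consecutive (possibly empty) blocks, one for each entry of `v`,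
where an h-block has at most one part and contributes `w^{|block|}`, and a v-block has all
parts equal to 1 and contributes `w^{ℓ}/ℓ!`. -/
noncomputable def Mcirc : List (ℝ × Bool) → List ℕ → ℝ
  | [], l => if l = [] then 1 else 0
  | (w, t) :: v, l =>
      ∑ i ∈ Finset.range (l.length + 1),
        (if t then (if (l.take i).length ≤ 1 then w ^ (l.take i).sum else 0)
         else if ∀ n ∈ l.take i, n = 1 then
           w ^ (l.take i).length / ((l.take i).length.factorial : ℝ)
         else 0) * Mcirc v (l.drop i)

/-- Membership in `U₀`: positive weights of total sum 1, no two consecutive v's. -/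
def memU0 (u : List (ℝ × Bool)) : Prop :=
  (∀ p ∈ u, 0 < p.1) ∧ (u.map Prod.fst).sum = 1 ∧
    List.Chain' (fun p q => p.2 = true ∨ q.2 = true) u

/-- `t_n(u)`: replace each h-interval by a part `n` and each v-interval by `n` ones. -/
def tnU (u : List (ℝ × Bool)) (n : ℕ) : List ℕ :=
  (u.map fun p => if p.2 then [n] else List.replicate n 1).flatten

/-- Merge each maximal run of consecutive v-intervals into a single v-interval,
summing the weights. -/
def mergeV : List (ℝ × Bool) → List (ℝ × Bool)
  | [] => []
  | (w, true) :: rest => (w, true) :: mergeV rest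
  | (w, false) :: rest =>
      match mergeV rest with
      | (w', false) :: rest' => (w + w', false) :: rest'
      | r => (w, false) :: r

/-! ## The set `Ũ₀` and the functions `φ_ũ` -/

/-- An element of `Ũ₀`. `t i = true` means type h, `false` means type v; `sep i` are the
separating compositions λ₀, …, λ_m. Only `w i`, `t i` for `i < m` and `sep i` for `i ≤ m`
are relevant. -/
structure UTilde where
  m : ℕ
  w : ℕ → ℝ
  t : ℕ → Bool
  sep : ℕ → List ℕ
  sep_pos : ∀ i, i ≤ m → ∀ n ∈ sep i, 0 < n
  sep_nonempty : ∃ i, i ≤ m ∧ sep i ≠ []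
  w_pos : ∀ i, i < m → 0 < w i
  w_sum : ∑ i ∈ Finset.range m, w i = 1
  vv : ∀ i, i + 1 < m → t i = false → t (i + 1) = false → sep (i + 1) ≠ []
  v_left : ∀ i, i < m → t i = false → sep i ≠ [] → 2 ≤ (sep i).getLastD 0
  v_right : ∀ i, i < m → t i = false → sep (i + 1) ≠ [] → 2 ≤ (sep (i + 1)).headD 0

namespace UTilde

variable (u : UTilde)

/-- `λ₀ ⊔ f 0 ⊔ λ₁ ⊔ … ⊔ f (m-1) ⊔ λ_m`. -/
def blocks (f : ℕ → List ℕ) : List ℕ :=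
  u.sep 0 ++ (List.ofFn fun i : Fin u.m => f (i : ℕ) ++ u.sep ((i : ℕ) + 1)).flatten

/-- `t_n(ũ)`. -/
def tn (n : ℕ) : List ℕ :=
  u.blocks fun i => if u.t i then [n] else List.replicate n 1

/-- Membership in `GK_ũ`. -/
def GKmem (l : List ℕ) : Prop := ∃ n, 1 ≤ n ∧ Relation.ReflTransGen Rel l (u.tn n)

/-- Position `i` (of type h) is adjacent to a v-interval. -/
def adj (i : ℕ) : Prop :=
  (0 < i ∧ u.t (i - 1) = false ∧ u.sep i = []) ∨
  (i + 1 < u.m ∧ u.t (i + 1) = false ∧ u.sep (i + 1) = [])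

instance (i : ℕ) : Decidable (u.adj i) := by unfold adj; infer_instance

def d (i : ℕ) : ℕ := if u.adj i then 2 else 1

/-- `λ(a,b)`, where `c` encodes both vectors: `a i = c i` on h-positions and
`b i = c i` on v-positions. -/
def lam (c : ℕ → ℕ) : List ℕ :=
  u.blocks fun i => if u.t i then [u.d i + c i] else List.replicate (c i) 1

/-- `λ_ũ = λ(0,0)`. -/
def lam0 : List ℕ := u.lam fun _ => 0

/-- `Π_{i : t_i = h} w_i^{a_i} · Π_{i : t_i = v} w_i^{b_i}/b_i!`. -/
noncomputable def phiVal (c : ℕ → ℕ) : ℝ≥0∞ :=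
  ∏ i ∈ Finset.range u.m,
    if u.t i then ENNReal.ofReal (u.w i) ^ c i
    else ENNReal.ofReal (u.w i) ^ c i / ((c i).factorial : ℝ≥0∞)

open Classical in
/-- The semifinite harmonic function `φ_ũ`. -/
noncomputable def phi (l : List ℕ) : ℝ≥0∞ :=
  if h : ∃ c : ℕ → ℕ, l = u.lam c then u.phiVal h.choose
  else if u.GKmem l then ⊤ else 0

/-- `u^ε(ũ)`: each part of each separating composition is replaced by an h-interval
of length `ε`. -/
def uEps (ε : ℝ) : List (ℝ × Bool) :=
  ((u.sep 0).map fun _ => (ε, true)) ++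
    (List.ofFn fun i : Fin u.m =>
      (u.w (i : ℕ), u.t (i : ℕ)) :: ((u.sep ((i : ℕ) + 1)).map fun _ => (ε, true))).flatten

/-- `n(ũ) = |λ₀| + … + |λ_m|`. -/
def nU : ℕ := ∑ i ∈ Finset.range (u.m + 1), (u.sep i).sum

/-- The list of intervals of `ũ` (separating compositions dropped). -/
def ubarList : List (ℝ × Bool) := List.ofFn fun i : Fin u.m => (u.w (i : ℕ), u.t (i : ℕ))

end UTilde

/-! ## The cone `K` and the maps `F_φ` -/

/-- `V`: finitely supported real functions on compositions. -/
abbrev V := Comp →₀ ℝ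

/-- `W`: span of the vectors `e_λ − Σ_μ κ(λ,μ)·e_μ`. -/
noncomputable def Wsub : Submodule ℝ V :=
  Submodule.span ℝ
    {x : V | ∃ l : Comp, ∀ μ : Comp, x μ = (if μ = l then 1 else 0) - (kappa l.1 μ.1 : ℝ)}

/-- `R = V/W`. -/
abbrev Rq := V ⧸ Wsub

/-- The cone `K ⊆ R`: classes of nonnegative vectors. -/
def Kcone : Set Rq :=
  {a | ∃ x : V, (∀ μ, 0 ≤ x μ) ∧ Submodule.Quotient.mk x = a}

/-- `Σ_λ x(λ)·φ(λ)` for a representative `x`. -/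
noncomputable def FphiV (φ : Comp → ℝ≥0∞) (x : V) : ℝ≥0∞ :=
  ∑' μ : Comp, ENNReal.ofReal (x μ) * φ μ

open Classical in
/-- `F_φ : K → [0,∞]` (defined via a choice of nonnegative representative; for harmonic `φ`
it is well defined). Outside `K` we set it to `0`. -/
noncomputable def Fphi (φ : Comp → ℝ≥0∞) (a : Rq) : ℝ≥0∞ :=
  if h : a ∈ Kcone then FphiV φ h.choose else 0

/-- Semifiniteness: not finite, and `F_φ` is determined by its finite values from below. -/
def Semifinite (φ : Comp → ℝ≥0∞) : Prop :=
  (¬ ∀ l, φ l < ⊤) ∧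
    ∀ a ∈ Kcone, Fphi φ a =
      sSup {y | ∃ b ∈ Kcone, a - b ∈ Kcone ∧ Fphi φ b < ⊤ ∧ y = Fphi φ b}

/-- Indecomposability of a semifinite harmonic function. -/
def IndecSemifinite (φ : Comp → ℝ≥0∞) : Prop :=
  ∀ ψ : Comp → ℝ≥0∞, HarmonicE ψ →
    (((∀ l, ψ l < ⊤) ∧ ψ ≠ 0) ∨ Semifinite ψ) →
    (∀ a ∈ Kcone, Fphi ψ a ≤ Fphi φ a) →
    ∃ c : ℝ≥0, ∀ l, ψ l = (c : ℝ≥0∞) * φ l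

end GK

namespace GK

section Aux
open Finset List
open Finset List

def incr (l : List ℕ) (p : ℕ) : List ℕ := l.set p (l.getD p 0 + 1)
def ins (l : List ℕ) (p : ℕ) : List ℕ := l.insertIdx p 1

@[simp] lemma length_incr (l : List ℕ) (p : ℕ) : (incr l p).length = l.length := by
  simp [incr]

lemma length_ins {l : List ℕ} {p : ℕ} (h : p ≤ l.length) : (ins l p).length = l.length + 1 :=
  List.length_insertIdx_of_le_length h _

lemma getD_take {l : List ℕ} {p i : ℕ} (h : p < i) : (l.take i).getD p 0 = l.getD p 0 := by
  simp [List.getD_eq_getElem?_getD, List.getElem?_take_of_lt h]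

lemma getD_drop (l : List ℕ) (i q : ℕ) : (l.drop i).getD q 0 = l.getD (i + q) 0 := by
  induction i generalizing l with
  | zero => simp
  | succ i ih =>
    cases l with
    | nil => simp
    | cons x xs =>
      rw [show i + 1 + q = (i + q) + 1 by omega]
      simpa using ih xs

lemma getD_set_self {l : List ℕ} {p : ℕ} (h : p < l.length) (a : ℕ) :
    (l.set p a).getD p 0 = a := by
  simp [List.getD_eq_getElem?_getD, List.getElem?_set_self h]

lemma set_getD_self {l : List ℕ} {p : ℕ} : l.set p (l.getD p 0) = l := by
  induction l generalizing p with
  | nil => simp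
  | cons x xs ih =>
    cases p with
    | zero => simp
    | succ p => simpa using ih (p := p)

lemma take_incr_of_lt {p i : ℕ} (h : p < i) (l : List ℕ) :
    (incr l p).take i = incr (l.take i) p := by
  unfold incr
  rw [List.take_set, getD_take h]

lemma drop_incr_of_lt {p i : ℕ} (h : p < i) (l : List ℕ) :
    (incr l p).drop i = l.drop i := by
  unfold incr
  rw [List.drop_set, if_pos h]

lemma take_incr_of_le (i q : ℕ) (l : List ℕ) : (incr l (i + q)).take i = l.take i := by
  unfold incr
  rw [List.take_set, List.set_eq_of_length_le]
  exact le_trans (List.length_take_le _ _) (Nat.le_add_right _ _)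

lemma drop_incr_of_le (i q : ℕ) (l : List ℕ) :
    (incr l (i + q)).drop i = incr (l.drop i) q := by
  unfold incr
  rw [List.drop_set, if_neg (by omega), Nat.add_sub_cancel_left, getD_drop]

lemma take_ins_of_le {i p : ℕ} (h : i ≤ p) (l : List ℕ) : (ins l p).take i = l.take i := by
  unfold ins
  induction i generalizing p l with
  | zero => simp
  | succ i ih =>
    obtain ⟨p, rfl⟩ : ∃ q, p = q + 1 := ⟨p - 1, by omega⟩
    cases l with
    | nil => rw [List.insertIdx_succ_nil]
    | cons x xs =>
      rw [List.insertIdx_succ_cons]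
      simp only [List.take_succ_cons]
      rw [ih (by omega)]

lemma drop_ins_of_le {i p : ℕ} (h : i ≤ p) {l : List ℕ} (hp : p ≤ l.length) :
    (ins l p).drop i = ins (l.drop i) (p - i) := by
  unfold ins
  induction i generalizing p l with
  | zero => simp
  | succ i ih =>
    obtain ⟨p, rfl⟩ : ∃ q, p = q + 1 := ⟨p - 1, by omega⟩
    cases l with
    | nil => simp at hp
    | cons x xs =>
      rw [List.insertIdx_succ_cons]
      simp only [List.drop_succ_cons, Nat.add_sub_add_right]
      exact ih (by omega) (by simpa using hp)

lemma take_ins_succ {p j : ℕ} (h : p ≤ j) {l : List ℕ} (hp : p ≤ l.length) :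
    (ins l p).take (j + 1) = ins (l.take j) p := by
  unfold ins
  induction p generalizing j l with
  | zero => simp [List.insertIdx_zero]
  | succ p ih =>
    obtain ⟨j, rfl⟩ : ∃ q, j = q + 1 := ⟨j - 1, by omega⟩
    cases l with
    | nil => simp at hp
    | cons x xs =>
      rw [List.insertIdx_succ_cons]
      simp only [List.take_succ_cons]
      rw [ih (by omega) (by simpa using hp), List.insertIdx_succ_cons]

lemma drop_ins_succ {p j : ℕ} (h : p ≤ j) {l : List ℕ} (hp : p ≤ l.length) :
    (ins l p).drop (j + 1) = l.drop j := by
  unfold ins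
  induction p generalizing j l with
  | zero => simp [List.insertIdx_zero]
  | succ p ih =>
    obtain ⟨j, rfl⟩ : ∃ q, j = q + 1 := ⟨j - 1, by omega⟩
    cases l with
    | nil => simp at hp
    | cons x xs =>
      rw [List.insertIdx_succ_cons]
      simp only [List.drop_succ_cons]
      exact ih (by omega) (by simpa using hp)

lemma insertIdx_eraseIdx_self : ∀ (l : List ℕ) (q : ℕ) (h : q < l.length),
    (l.eraseIdx q).insertIdx q l[q] = l
  | x :: xs, 0, _ => rfl
  | x :: xs, q + 1, h => by
    simp only [List.eraseIdx_cons_succ, List.getElem_cons_succ, List.insertIdx_succ_cons]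
    rw [insertIdx_eraseIdx_self xs q (by simpa using h)]

noncomputable def coef (w : ℝ) (t : Bool) (b : List ℕ) : ℝ :=
  if t then (if b.length ≤ 1 then w ^ b.sum else 0)
  else if ∀ n ∈ b, n = 1 then w ^ b.length / (b.length.factorial : ℝ) else 0

lemma Mcirc_cons (w : ℝ) (t : Bool) (v : List (ℝ × Bool)) (l : List ℕ) :
    Mcirc ((w, t) :: v) l
      = ∑ i ∈ Finset.range (l.length + 1), coef w t (l.take i) * Mcirc v (l.drop i) := rfl

lemma coef_nonneg {w : ℝ} (hw : 0 ≤ w) (t : Bool) (b : List ℕ) : 0 ≤ coef w t b := by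
  unfold coef
  split_ifs <;> positivity

lemma Mcirc_nonneg {u : List (ℝ × Bool)} (hu : ∀ p ∈ u, 0 ≤ p.1) (l : List ℕ) :
    0 ≤ Mcirc u l := by
  induction u generalizing l with
  | nil => unfold Mcirc; split_ifs <;> norm_num
  | cons wt v ih =>
    obtain ⟨w, t⟩ := wt
    rw [Mcirc_cons]
    refine Finset.sum_nonneg fun i _ => mul_nonneg (coef_nonneg ?_ _ _) (ih ?_ _)
    · exact hu (w, t) List.mem_cons_self
    · exact fun p hp => hu p (List.mem_cons_of_mem _ hp)

lemma coef_nil (w : ℝ) (t : Bool) : coef w t [] = 1 := by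
  cases t <;> simp [coef]

lemma Mcirc_nil (u : List (ℝ × Bool)) : Mcirc u [] = 1 := by
  induction u with
  | nil => rfl
  | cons wt v ih =>
    obtain ⟨w, t⟩ := wt
    rw [Mcirc_cons]
    simp [coef_nil, ih]

lemma coef_zero_of_len {w : ℝ} {b : List ℕ} (hb : 2 ≤ b.length) : coef w true b = 0 := by
  simp [coef, show ¬ b.length ≤ 1 by omega]

/-- The key one-block identity. -/
lemma T_eq (w : ℝ) (t : Bool) {b : List ℕ} (hb : IsComposition b) :
    ((∑ p ∈ Finset.range b.length, coef w t (incr b p)) +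
      ∑ p ∈ Finset.range (b.length + 1), coef w t (ins b p)) = w * coef w t b := by
  cases t with
  | true =>
    match b, hb with
    | [], _ => simp [coef, incr, ins, List.insertIdx_zero]
    | [a], hb => 
      have h1 : incr [a] 0 = [a + 1] := rfl
      have h2 : ins [a] 0 = [1, a] := rfl
      have h3 : ins [a] 1 = [a, 1] := rfl
      simp [Finset.sum_range_succ, h1, h2, h3, coef, pow_succ, mul_comm]
    | a :: c :: rest, hb =>
      have hlen : 2 ≤ (a :: c :: rest).length := by simp
      rw [Finset.sum_eq_zero, Finset.sum_eq_zero, coef_zero_of_len hlen]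
      · ring
      · intro p hp
        refine coef_zero_of_len ?_
        calc 2 ≤ (a :: c :: rest).length := hlen
        _ ≤ (ins (a :: c :: rest) p).length := List.length_le_length_insertIdx
      · intro p hp
        exact coef_zero_of_len (by rw [length_incr]; exact hlen)
  | false =>
    have hincr : ∀ p ∈ Finset.range b.length, coef w false (incr b p) = 0 := by
      intro p hp
      rw [Finset.mem_range] at hp
      have hmem : b.getD p 0 + 1 ∈ incr b p := by
        have : (incr b p).getD p 0 = b.getD p 0 + 1 := getD_set_self hp _
        rw [List.getD_eq_getElem?_getD] at this
        have hlt : p < (incr b p).length := by rw [length_incr]; exact hp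
        rw [List.getElem?_eq_getElem hlt] at this
        simp only [Option.getD_some] at this
        rw [← this]
        exact List.getElem_mem _
      have hne : ¬ ∀ n ∈ incr b p, n = 1 := by
        intro hall
        have hbp : 0 < b.getD p 0 := by
          have : b.getD p 0 ∈ b := by
            rw [List.getD_eq_getElem?_getD, List.getElem?_eq_getElem hp]
            exact List.getElem_mem _
          exact hb _ this
        have := hall _ hmem
        omega
      simp [coef, hne]
    rw [Finset.sum_congr rfl hincr, Finset.sum_const, smul_zero, zero_add]
    by_cases h1 : ∀ n ∈ b, n = 1
    · have hins : ∀ p ∈ Finset.range (b.length + 1),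
          coef w false (ins b p) = w ^ (b.length + 1) / ((b.length + 1).factorial : ℝ) := by
        intro p hp
        rw [Finset.mem_range] at hp
        have hp' : p ≤ b.length := by omega
        have hall : ∀ n ∈ ins b p, n = 1 := by
          intro n hn
          rcases (List.mem_insertIdx hp').1 hn with h | h
          · exact h
          · exact h1 n h
        rw [coef, if_neg (by simp), if_pos hall, length_ins hp']
      rw [Finset.sum_congr rfl hins, Finset.sum_const, Finset.card_range, coef,
        if_neg (by simp), if_pos h1]
      rw [nsmul_eq_mul, Nat.factorial_succ]
      have h0 : (b.length.factorial : ℝ) ≠ 0 := by positivity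
      push_cast
      field_simp
      ring
    · push_neg at h1
      obtain ⟨a, ha, ha1⟩ := h1
      have hins : ∀ p ∈ Finset.range (b.length + 1), coef w false (ins b p) = 0 := by
        intro p hp
        rw [Finset.mem_range] at hp
        have hmem : a ∈ ins b p := (List.mem_insertIdx (by omega)).2 (Or.inr ha)
        have hne : ¬ ∀ n ∈ ins b p, n = 1 := fun hall => ha1 (hall a hmem)
        simp [coef, hne]
      rw [Finset.sum_congr rfl hins, Finset.sum_const, smul_zero, coef,
        if_neg (by simp), if_neg (fun hall => ha1 (hall a ha)), mul_zero]


/-- The key summation identity: applying all raising operators to `λ` and summing `M°`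
gives the total weight times `M°_λ`. -/
lemma S_eq (u : List (ℝ × Bool)) : ∀ {l : List ℕ}, IsComposition l →
    ((∑ p ∈ Finset.range l.length, Mcirc u (incr l p)) +
      ∑ p ∈ Finset.range (l.length + 1), Mcirc u (ins l p))
      = (u.map Prod.fst).sum * Mcirc u l := by
  induction u with
  | nil =>
    intro l hl
    have h1 : ∀ p ∈ Finset.range l.length, Mcirc [] (incr l p) = 0 := by
      intro p hp
      rw [Finset.mem_range] at hp
      have hne : incr l p ≠ [] := by
        intro h
        have := length_incr l p
        rw [h] at this
        simp only [List.length_nil] at this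
        omega
      simp [Mcirc, hne]
    have h2 : ∀ p ∈ Finset.range (l.length + 1), Mcirc [] (ins l p) = 0 := by
      intro p hp
      rw [Finset.mem_range] at hp
      have hlen := length_ins (l := l) (p := p) (by omega)
      have hne : ins l p ≠ [] := by
        intro h
        rw [h] at hlen
        simp at hlen
      simp [Mcirc, hne]
    rw [Finset.sum_congr rfl h1, Finset.sum_congr rfl h2]
    simp
  | cons wt v ih =>
    obtain ⟨w, t⟩ := wt
    intro l hl
    set n := l.length with hn
    have hA : (∑ p ∈ Finset.range n, Mcirc ((w, t) :: v) (incr l p))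
        = (∑ i ∈ Finset.range (n + 1),
            (∑ p ∈ Finset.range i, coef w t (incr (l.take i) p)) * Mcirc v (l.drop i))
          + ∑ i ∈ Finset.range (n + 1),
            coef w t (l.take i) * ∑ q ∈ Finset.range (n - i), Mcirc v (incr (l.drop i) q) := by
      calc ∑ p ∈ Finset.range n, Mcirc ((w, t) :: v) (incr l p)
          = ∑ p ∈ Finset.range n, ∑ i ∈ Finset.range (n + 1),
              coef w t ((incr l p).take i) * Mcirc v ((incr l p).drop i) := by
            refine Finset.sum_congr rfl fun p hp => ?_
            rw [Mcirc_cons, length_incr, ← hn]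
        _ = ∑ i ∈ Finset.range (n + 1), ∑ p ∈ Finset.range n,
              coef w t ((incr l p).take i) * Mcirc v ((incr l p).drop i) := Finset.sum_comm
        _ = ∑ i ∈ Finset.range (n + 1),
              ((∑ p ∈ Finset.range i,
                  coef w t ((incr l p).take i) * Mcirc v ((incr l p).drop i))
               + ∑ q ∈ Finset.range (n - i),
                  coef w t ((incr l (i + q)).take i) * Mcirc v ((incr l (i + q)).drop i)) := by
            refine Finset.sum_congr rfl fun i hi => ?_
            rw [Finset.mem_range] at hi
            rw [Finset.range_eq_Ico,
              ← Finset.sum_Ico_consecutive _ (Nat.zero_le i) (by omega : i ≤ n),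
              Finset.sum_Ico_eq_sum_range, Finset.sum_Ico_eq_sum_range]
            simp only [Nat.sub_zero, zero_add]
        _ = _ := by
            rw [Finset.sum_add_distrib]
            congr 1
            · refine Finset.sum_congr rfl fun i hi => ?_
              rw [Finset.sum_mul]
              refine Finset.sum_congr rfl fun p hp => ?_
              rw [Finset.mem_range] at hp
              rw [take_incr_of_lt hp, drop_incr_of_lt hp]
            · refine Finset.sum_congr rfl fun i hi => ?_
              rw [Finset.mul_sum]
              refine Finset.sum_congr rfl fun q hq => ?_
              rw [take_incr_of_le, drop_incr_of_le]
    have hB : (∑ p ∈ Finset.range (n + 1), Mcirc ((w, t) :: v) (ins l p))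
        = (∑ i ∈ Finset.range (n + 1),
            (∑ p ∈ Finset.range (i + 1), coef w t (ins (l.take i) p)) * Mcirc v (l.drop i))
          + ∑ i ∈ Finset.range (n + 1),
            coef w t (l.take i) * ∑ q ∈ Finset.range (n + 1 - i), Mcirc v (ins (l.drop i) q) := by
      calc ∑ p ∈ Finset.range (n + 1), Mcirc ((w, t) :: v) (ins l p)
          = ∑ p ∈ Finset.range (n + 1), ∑ i ∈ Finset.range (n + 1 + 1),
              coef w t ((ins l p).take i) * Mcirc v ((ins l p).drop i) := by
            refine Finset.sum_congr rfl fun p hp => ?_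
            rw [Finset.mem_range] at hp
            rw [Mcirc_cons, length_ins (by omega), ← hn]
        _ = ∑ i ∈ Finset.range (n + 1 + 1), ∑ p ∈ Finset.range (n + 1),
              coef w t ((ins l p).take i) * Mcirc v ((ins l p).drop i) := Finset.sum_comm
        _ = ∑ i ∈ Finset.range (n + 1 + 1),
              ((∑ p ∈ Finset.range i,
                  coef w t ((ins l p).take i) * Mcirc v ((ins l p).drop i))
               + ∑ q ∈ Finset.range (n + 1 - i),
                  coef w t ((ins l (i + q)).take i) * Mcirc v ((ins l (i + q)).drop i)) := by
            refine Finset.sum_congr rfl fun i hi => ?_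
            rw [Finset.mem_range] at hi
            rw [Finset.range_eq_Ico,
              ← Finset.sum_Ico_consecutive _ (Nat.zero_le i) (by omega : i ≤ n + 1),
              Finset.sum_Ico_eq_sum_range, Finset.sum_Ico_eq_sum_range]
            simp only [Nat.sub_zero, zero_add]
        _ = (∑ i ∈ Finset.range (n + 1 + 1), ∑ p ∈ Finset.range i,
              coef w t ((ins l p).take i) * Mcirc v ((ins l p).drop i))
            + ∑ i ∈ Finset.range (n + 1 + 1), ∑ q ∈ Finset.range (n + 1 - i),
              coef w t ((ins l (i + q)).take i) * Mcirc v ((ins l (i + q)).drop i) :=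
            Finset.sum_add_distrib
        _ = _ := by
          congr 1
          · rw [Finset.sum_range_succ']
            simp only [Finset.range_zero, Finset.sum_empty, add_zero]
            refine Finset.sum_congr rfl fun i hi => ?_
            rw [Finset.mem_range] at hi
            rw [Finset.sum_mul]
            refine Finset.sum_congr rfl fun p hp => ?_
            rw [Finset.mem_range] at hp
            rw [take_ins_succ (by omega) (by omega), drop_ins_succ (by omega) (by omega)]
          · rw [Finset.sum_range_succ]
            simp only [Nat.sub_self, Finset.range_zero, Finset.sum_empty, add_zero]
            refine Finset.sum_congr rfl fun i hi => ?_
            rw [Finset.mem_range] at hi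
            rw [Finset.mul_sum]
            refine Finset.sum_congr rfl fun q hq => ?_
            rw [Finset.mem_range] at hq
            rw [take_ins_of_le (Nat.le_add_right _ _),
              drop_ins_of_le (Nat.le_add_right _ _) (by omega), Nat.add_sub_cancel_left]
    rw [hA, hB, ← Finset.sum_add_distrib, ← Finset.sum_add_distrib, ← Finset.sum_add_distrib,
      Mcirc_cons, List.map_cons, List.sum_cons, Finset.mul_sum, ← hn]
    refine Finset.sum_congr rfl fun i hi => ?_
    rw [Finset.mem_range] at hi
    have hcompt : IsComposition (l.take i) := fun x hx => hl x (List.take_subset _ _ hx)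
    have hcompd : IsComposition (l.drop i) := fun x hx => hl x (List.drop_subset _ _ hx)
    have hti : (l.take i).length = i := by rw [List.length_take]; omega
    have e1 := T_eq w t hcompt
    rw [hti] at e1
    have e2 := ih hcompd
    rw [List.length_drop, ← hn] at e2
    rw [show n + 1 - i = n - i + 1 by omega]
    linear_combination Mcirc v (l.drop i) * e1 + coef w t (l.take i) * e2



lemma incr_comp {l : List ℕ} (hl : IsComposition l) (p : ℕ) : IsComposition (incr l p) := by
  intro x hx
  rcases List.mem_or_eq_of_mem_set hx with h | h
  · exact hl x h
  · omega

lemma ins_comp {l : List ℕ} (hl : IsComposition l) (p : ℕ) : IsComposition (ins l p) := by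
  intro x hx
  by_cases hp : p ≤ l.length
  · rcases (List.mem_insertIdx hp).1 hx with h | h
    · omega
    · exact hl x h
  · rw [ins, List.insertIdx_of_length_lt (by omega)] at hx
    exact hl x hx

lemma stepAt_incr {l : List ℕ} (hl : IsComposition l) {p : ℕ} (hp : p < l.length) :
    stepAt (incr l p) p = l := by
  have hpos : 0 < l.getD p 0 := by
    refine hl _ ?_
    rw [List.getD_eq_getElem?_getD, List.getElem?_eq_getElem hp]
    exact List.getElem_mem _
  have hgd : (incr l p).getD p 0 = l.getD p 0 + 1 := getD_set_self hp _
  rw [stepAt, if_pos (by omega), hgd]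
  unfold incr
  rw [List.set_set, Nat.add_sub_cancel, set_getD_self]

lemma stepAt_ins {l : List ℕ} {p : ℕ} (hp : p ≤ l.length) :
    stepAt (ins l p) p = l := by
  have hlt : p < (ins l p).length := by rw [length_ins hp]; omega
  have hgd : (ins l p).getD p 0 = 1 := by
    rw [List.getD_eq_getElem?_getD, List.getElem?_eq_getElem hlt]
    simp only [Option.getD_some]
    exact List.getElem_insertIdx_self hlt
  rw [stepAt, hgd, if_neg (by omega)]
  exact List.eraseIdx_insertIdx_self 1

lemma step_inv {l μ : List ℕ} (hμ : IsComposition μ) {q : ℕ} (hq : q < μ.length)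
    (h : stepAt μ q = l) :
    (q < l.length ∧ μ = incr l q) ∨ (q ≤ l.length ∧ μ = ins l q) := by
  unfold stepAt at h
  by_cases h2 : 2 ≤ μ.getD q 0
  · rw [if_pos h2] at h
    left
    have hlen : l.length = μ.length := by rw [← h]; simp
    refine ⟨by omega, ?_⟩
    unfold incr
    rw [← h, getD_set_self hq, List.set_set,
      show μ.getD q 0 - 1 + 1 = μ.getD q 0 by omega, set_getD_self]
  · rw [if_neg h2] at h
    right
    have hgd : μ.getD q 0 = μ[q]'hq := by
      rw [List.getD_eq_getElem?_getD, List.getElem?_eq_getElem hq]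
      rfl
    have hpos : 0 < μ[q]'hq := hμ _ (List.getElem_mem _)
    have hq1 : μ[q]'hq = 1 := by omega
    have hlen : l.length = μ.length - 1 := by
      rw [← h, List.length_eraseIdx_of_lt hq]
    refine ⟨by omega, ?_⟩
    unfold ins
    rw [← h, show (1 : ℕ) = μ[q]'hq from hq1.symm]
    exact (insertIdx_eraseIdx_self μ q hq).symm

end Aux


/-- for every `u ∈ U₀`, `φ_u(λ) = M°_λ(u)` is a finite harmonic function
on `GK` with `φ_u(∅) = 1`. -/
theorem phiU_finiteHarmonic (u : List (ℝ × Bool)) (hu : memU0 u) :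
    FiniteHarmonic (fun l : Comp => Mcirc u l.1) ∧ Mcirc u [] = 1 := by
  classical
  obtain ⟨hpos, hsum, -⟩ := hu
  have hnonneg : ∀ p ∈ u, 0 ≤ p.1 := fun p hp => le_of_lt (hpos p hp)
  refine ⟨⟨?_, fun l => Mcirc_nonneg hnonneg l.1⟩, Mcirc_nil u⟩
  intro l
  simp only
  set e1 : ℕ → Comp := fun p => ⟨incr l.1 p, incr_comp l.2 p⟩ with he1
  set e2 : ℕ → Comp := fun p => ⟨ins l.1 p, ins_comp l.2 p⟩ with he2
  have hlen1 : ∀ μ ∈ (Finset.range l.1.length).image e1, (μ : Comp).1.length = l.1.length := by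
    intro μ hμ
    obtain ⟨p, hp, rfl⟩ := Finset.mem_image.1 hμ
    exact length_incr _ _
  have hlen2 : ∀ μ ∈ (Finset.range (l.1.length + 1)).image e2,
      (μ : Comp).1.length = l.1.length + 1 := by
    intro μ hμ
    obtain ⟨p, hp, rfl⟩ := Finset.mem_image.1 hμ
    rw [Finset.mem_range] at hp
    exact length_ins (by omega)
  have hvan : ∀ μ : Comp,
      μ ∉ (Finset.range l.1.length).image e1 ∪ (Finset.range (l.1.length + 1)).image e2 →
      (kappa l.1 μ.1 : ℝ) * Mcirc u μ.1 = 0 := by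
    intro μ hμs
    have hk : kappa l.1 μ.1 = 0 := by
      by_contra hk
      obtain ⟨q, hq⟩ := Finset.card_pos.1 (Nat.pos_of_ne_zero hk)
      rw [Finset.mem_filter, Finset.mem_range] at hq
      rcases step_inv μ.2 hq.1 hq.2 with ⟨hql, heq⟩ | ⟨hql, heq⟩
      · exact hμs (Finset.mem_union_left _
          (Finset.mem_image.2 ⟨q, Finset.mem_range.2 hql, Subtype.ext heq.symm⟩))
      · exact hμs (Finset.mem_union_right _
          (Finset.mem_image.2 ⟨q, Finset.mem_range.2 (by omega), Subtype.ext heq.symm⟩))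
    rw [hk]
    simp
  have hdisj : Disjoint ((Finset.range l.1.length).image e1)
      ((Finset.range (l.1.length + 1)).image e2) := by
    rw [Finset.disjoint_left]
    intro μ h1 h2
    have := hlen1 μ h1
    have := hlen2 μ h2
    omega
  have hk1 : ∀ μ ∈ (Finset.range l.1.length).image e1,
      (kappa l.1 μ.1 : ℝ) * Mcirc u μ.1
        = (((Finset.range l.1.length).filter fun p => e1 p = μ).card : ℝ) * Mcirc u μ.1 := by
    intro μ hμ
    have hml : μ.1.length = l.1.length := hlen1 μ hμ
    have : kappa l.1 μ.1 = ((Finset.range l.1.length).filter fun p => e1 p = μ).card := by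
      rw [kappa, hml]
      congr 1
      refine Finset.filter_congr fun q hq => ?_
      rw [Finset.mem_range] at hq
      constructor
      · intro hstep
        rcases step_inv μ.2 (hml ▸ hq) hstep with ⟨hql, heq⟩ | ⟨hql, heq⟩
        · exact Subtype.ext heq.symm
        · exfalso
          have := length_ins (l := l.1) (p := q) hql
          rw [← heq] at this
          omega
      · intro he
        rw [← he]
        exact stepAt_incr l.2 hq
    rw [this]
  have hk2 : ∀ μ ∈ (Finset.range (l.1.length + 1)).image e2,
      (kappa l.1 μ.1 : ℝ) * Mcirc u μ.1
        = (((Finset.range (l.1.length + 1)).filter fun p => e2 p = μ).card : ℝ)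
            * Mcirc u μ.1 := by
    intro μ hμ
    have hml : μ.1.length = l.1.length + 1 := hlen2 μ hμ
    have : kappa l.1 μ.1 = ((Finset.range (l.1.length + 1)).filter fun p => e2 p = μ).card := by
      rw [kappa, hml]
      congr 1
      refine Finset.filter_congr fun q hq => ?_
      rw [Finset.mem_range] at hq
      constructor
      · intro hstep
        rcases step_inv μ.2 (hml ▸ hq) hstep with ⟨hql, heq⟩ | ⟨hql, heq⟩
        · exfalso
          have := length_incr l.1 q
          rw [← heq] at this
          omega
        · exact Subtype.ext heq.symm
      · intro he
        rw [← he]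
        refine stepAt_ins (by omega)
    rw [this]
  have hc1 : ∑ μ ∈ (Finset.range l.1.length).image e1,
      (((Finset.range l.1.length).filter fun p => e1 p = μ).card : ℝ) * Mcirc u μ.1
        = ∑ p ∈ Finset.range l.1.length, Mcirc u (incr l.1 p) := by
    have h := Finset.sum_comp (s := Finset.range l.1.length)
      (fun μ : Comp => Mcirc u μ.1) e1
    simp only [nsmul_eq_mul] at h
    exact h.symm
  have hc2 : ∑ μ ∈ (Finset.range (l.1.length + 1)).image e2,
      (((Finset.range (l.1.length + 1)).filter fun p => e2 p = μ).card : ℝ) * Mcirc u μ.1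
        = ∑ p ∈ Finset.range (l.1.length + 1), Mcirc u (ins l.1 p) := by
    have h := Finset.sum_comp (s := Finset.range (l.1.length + 1))
      (fun μ : Comp => Mcirc u μ.1) e2
    simp only [nsmul_eq_mul] at h
    exact h.symm
  rw [tsum_eq_sum hvan, Finset.sum_union hdisj, Finset.sum_congr rfl hk1,
    Finset.sum_congr rfl hk2, hc1, hc2, S_eq u l.2, hsum, one_mul]


end GK
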